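/- The parametric region in Theorem 1 is convex: for a fixed channel, the set of (R₀,R₁) ∈ ℝ≥0² such that R₀ ≤ min{I(U₁;Y₃), I(U₂;Y₂)} and R₀+R₁ ≤ min{I(U₁;Y₃)+I(X;Y₁|U₁), I(U₂;Y₂)+I(X;Y₁|U₂)} for some Markov triple U₁ → U₂ → X (all finitely valued, composed with the fixed channel p(y₁,y₂,y₃|x)) is a convex subset of ℝ². -/

import Mathlib

open Real BigOperators Finset

noncomputable section

/-- Probability that a random variable `X` takes value `a`, under weight function `μ`. -/
def prob {Ω : Type*} [Fintype Ω] {A : Type*} [DecidableEq A]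
    (μ : Ω → ℝ) (X : Ω → A) (a : A) : ℝ :=
  ∑ ω, if X ω = a then μ ω else 0

/-- Shannon entropy (natural log) of a finitely-valued random variable. -/
def Hent {Ω : Type*} [Fintype Ω] {A : Type*} [Fintype A] [DecidableEq A]
    (μ : Ω → ℝ) (X : Ω → A) : ℝ :=
  ∑ a, Real.negMulLog (prob μ X a)

/-- Mutual information `I(X;Y)`. -/
def MI {Ω : Type*} [Fintype Ω] {A B : Type*} [Fintype A] [DecidableEq A]
    [Fintype B] [DecidableEq B] (μ : Ω → ℝ) (X : Ω → A) (Y : Ω → B) : ℝ :=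
  Hent μ X + Hent μ Y - Hent μ (fun ω => (X ω, Y ω))

/-- Conditional mutual information `I(X;Y|Z)`. -/
def CMI {Ω : Type*} [Fintype Ω] {A B C : Type*} [Fintype A] [DecidableEq A]
    [Fintype B] [DecidableEq B] [Fintype C] [DecidableEq C]
    (μ : Ω → ℝ) (X : Ω → A) (Y : Ω → B) (Z : Ω → C) : ℝ :=
  Hent μ (fun ω => (X ω, Z ω)) + Hent μ (fun ω => (Y ω, Z ω))
    - Hent μ (fun ω => (X ω, Y ω, Z ω)) - Hent μ Z

/-- `μ` is a probability mass function on the finite sample space `Ω`. -/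
def IsProbMeasure {Ω : Type*} [Fintype Ω] (μ : Ω → ℝ) : Prop :=
  (∀ ω, 0 ≤ μ ω) ∧ ∑ ω, μ ω = 1

/-- `X → Y → Z` forms a Markov chain: `X` and `Z` are conditionally independent given `Y`. -/
def Markov {Ω : Type*} [Fintype Ω] {A B C : Type*} [DecidableEq A]
    [DecidableEq B] [DecidableEq C]
    (μ : Ω → ℝ) (X : Ω → A) (Y : Ω → B) (Z : Ω → C) : Prop :=
  ∀ a b c, prob μ (fun ω => (X ω, Y ω, Z ω)) (a, b, c) * prob μ Y b
    = prob μ (fun ω => (X ω, Y ω)) (a, b) * prob μ (fun ω => (Y ω, Z ω)) (b, c)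

end

/-- The rate region of Theorem 1 for a fixed channel `W`: the union over all
auxiliary distributions `p(u₁)p(u₂|u₁)p(x|u₂)` (finite auxiliary alphabets)
of the pairs `(R₀,R₁) ∈ ℝ≥0²` with `R₀ ≤ min{I(U₁;Y₃), I(U₂;Y₂)}` and
`R₀+R₁ ≤ min{I(U₁;Y₃)+I(X;Y₁|U₁), I(U₂;Y₂)+I(X;Y₁|U₂)}`. -/
def capRegionThm1 {𝒳 𝒴₁ 𝒴₂ 𝒴₃ : Type*} [Fintype 𝒳] [DecidableEq 𝒳]
    [Fintype 𝒴₁] [DecidableEq 𝒴₁] [Fintype 𝒴₂] [DecidableEq 𝒴₂]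
    [Fintype 𝒴₃] [DecidableEq 𝒴₃]
    (W : 𝒳 → 𝒴₁ × 𝒴₂ × 𝒴₃ → ℝ) : Set (ℝ × ℝ) :=
  {R | 0 ≤ R.1 ∧ 0 ≤ R.2 ∧
    ∃ (n m : ℕ) (q₁ : Fin n → ℝ) (q₂ : Fin n → Fin m → ℝ) (qx : Fin m → 𝒳 → ℝ),
      (∀ u, 0 ≤ q₁ u) ∧ (∑ u, q₁ u) = 1 ∧
      (∀ u v, 0 ≤ q₂ u v) ∧ (∀ u, (∑ v, q₂ u v) = 1) ∧
      (∀ v x, 0 ≤ qx v x) ∧ (∀ v, (∑ x, qx v x) = 1) ∧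
      (let μ : Fin n × Fin m × 𝒳 × (𝒴₁ × 𝒴₂ × 𝒴₃) → ℝ := fun ω =>
         q₁ ω.1 * q₂ ω.1 ω.2.1 * qx ω.2.1 ω.2.2.1 * W ω.2.2.1 ω.2.2.2
       R.1 ≤ min (MI μ (fun ω => ω.1) (fun ω => ω.2.2.2.2.2))
                 (MI μ (fun ω => ω.2.1) (fun ω => ω.2.2.2.2.1)) ∧
       R.1 + R.2 ≤
         min (MI μ (fun ω => ω.1) (fun ω => ω.2.2.2.2.2)
              + CMI μ (fun ω => ω.2.2.1) (fun ω => ω.2.2.2.1) (fun ω => ω.1))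
             (MI μ (fun ω => ω.2.1) (fun ω => ω.2.2.2.2.1)
              + CMI μ (fun ω => ω.2.2.1) (fun ω => ω.2.2.2.1) (fun ω => ω.2.1)))}

noncomputable section CRAux
set_option linter.unusedSectionVars false
set_option linter.unusedVariables false
open Real

lemma prob_nonneg' {Ω : Type*} [Fintype Ω] {A : Type*} [DecidableEq A]
    {μ : Ω → ℝ} (hμ : ∀ ω, 0 ≤ μ ω) (X : Ω → A) (a : A) : 0 ≤ prob μ X a := by
  unfold prob
  exact Finset.sum_nonneg fun ω _ => by split <;> simp [hμ ω]

lemma sum_prob' {Ω : Type*} [Fintype Ω] {A : Type*} [Fintype A] [DecidableEq A]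
    (μ : Ω → ℝ) (X : Ω → A) : ∑ a, prob μ X a = ∑ ω, μ ω := by
  unfold prob
  rw [Finset.sum_comm]
  refine Finset.sum_congr rfl fun ω _ => ?_
  simp

lemma prob_comp_inj' {Ω : Type*} [Fintype Ω] {A B : Type*} [DecidableEq A] [DecidableEq B]
    (μ : Ω → ℝ) (X : Ω → A) {f : A → B} (hf : Function.Injective f) (a : A) :
    prob μ (fun ω => f (X ω)) (f a) = prob μ X a := by
  unfold prob
  refine Finset.sum_congr rfl fun ω _ => ?_
  simp [hf.eq_iff]

lemma prob_eq_zero' {Ω : Type*} [Fintype Ω] {A : Type*} [DecidableEq A]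
    (μ : Ω → ℝ) (X : Ω → A) {c : A} (h : ∀ ω, X ω ≠ c) : prob μ X c = 0 := by
  unfold prob
  exact Finset.sum_eq_zero fun ω _ => if_neg (h ω)

lemma Hent_split' {Ω' Ωa Ωb : Type*} [Fintype Ω'] [Fintype Ωa] [Fintype Ωb]
    {A Aa Ab : Type*} [Fintype A] [DecidableEq A] [Fintype Aa] [DecidableEq Aa]
    [Fintype Ab] [DecidableEq Ab]
    {μ' : Ω' → ℝ} {μa : Ωa → ℝ} {μb : Ωb → ℝ} {t s : ℝ}
    {V' : Ω' → A} {Va : Ωa → Aa} {Vb : Ωb → Ab}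
    {ja : Aa → A} {jb : Ab → A}
    (hja : Function.Injective ja) (hjb : Function.Injective jb)
    (hdis : ∀ x y, ja x ≠ jb y)
    (hcov : ∀ c, (∃ x, ja x = c) ∨ (∃ y, jb y = c))
    (hpa : ∀ x, prob μ' V' (ja x) = t * prob μa Va x)
    (hpb : ∀ y, prob μ' V' (jb y) = s * prob μb Vb y)
    (hma : ∑ ω, μa ω = 1) (hmb : ∑ ω, μb ω = 1) :
    Hent μ' V' = negMulLog t + negMulLog s + t * Hent μa Va + s * Hent μb Vb := by
  have huniv : (Finset.univ : Finset A) = Finset.univ.image ja ∪ Finset.univ.image jb := by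
    ext c
    simp only [Finset.mem_univ, Finset.mem_union, Finset.mem_image, true_iff]
    simpa using hcov c
  have hdisj : Disjoint (Finset.univ.image ja) (Finset.univ.image jb) := by
    rw [Finset.disjoint_left]
    intro c hc1 hc2
    simp only [Finset.mem_image] at hc1 hc2
    obtain ⟨x, -, hx⟩ := hc1
    obtain ⟨y, -, hy⟩ := hc2
    exact hdis x y (hx.trans hy.symm)
  unfold Hent
  rw [huniv, Finset.sum_union hdisj,
    Finset.sum_image (fun x _ y _ h => hja h),
    Finset.sum_image (fun x _ y _ h => hjb h)]
  have hA : ∑ x, negMulLog (prob μ' V' (ja x))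
      = negMulLog t + t * Hent μa Va := by
    simp only [hpa, negMulLog_mul]
    rw [Finset.sum_add_distrib, ← Finset.sum_mul, sum_prob', hma, one_mul, ← Finset.mul_sum]
    unfold Hent
    ring
  have hB : ∑ y, negMulLog (prob μ' V' (jb y))
      = negMulLog s + s * Hent μb Vb := by
    simp only [hpb, negMulLog_mul]
    rw [Finset.sum_add_distrib, ← Finset.sum_mul, sum_prob', hmb, one_mul, ← Finset.mul_sum]
    unfold Hent
    ring
  unfold Hent at hA hB
  rw [hA, hB]
  ring

lemma Hent_mix_ge' {Ω' Ωa Ωb : Type*} [Fintype Ω'] [Fintype Ωa] [Fintype Ωb]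
    {C : Type*} [Fintype C] [DecidableEq C]
    {μ' : Ω' → ℝ} {μa : Ωa → ℝ} {μb : Ωb → ℝ} {t s : ℝ}
    {V' : Ω' → C} {Va : Ωa → C} {Vb : Ωb → C}
    (hμa : ∀ ω, 0 ≤ μa ω) (hμb : ∀ ω, 0 ≤ μb ω)
    (ht : 0 ≤ t) (hs : 0 ≤ s) (hts : t + s = 1)
    (hp : ∀ c, prob μ' V' c = t * prob μa Va c + s * prob μb Vb c) :
    t * Hent μa Va + s * Hent μb Vb ≤ Hent μ' V' := by
  unfold Hent
  rw [Finset.mul_sum, Finset.mul_sum, ← Finset.sum_add_distrib]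
  refine Finset.sum_le_sum fun c _ => ?_
  rw [hp c]
  have := Real.concaveOn_negMulLog.2 (Set.mem_Ici.2 (prob_nonneg' hμa Va c))
    (Set.mem_Ici.2 (prob_nonneg' hμb Vb c)) ht hs hts
  simpa [smul_eq_mul] using this

section Construction

def muD {n m : ℕ} {Z : Type*} (q1 : Fin n → ℝ) (q2 : Fin n → Fin m → ℝ)
    (Wv : Fin m → Z → ℝ) : Fin n × Fin m × Z → ℝ :=
  fun ω => q1 ω.1 * q2 ω.1 ω.2.1 * Wv ω.2.1 ω.2.2

def q1C {na nb : ℕ} (q1a : Fin na → ℝ) (q1b : Fin nb → ℝ) (t s : ℝ) : Fin (na + nb) → ℝ :=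
  Fin.addCases (fun u => t * q1a u) (fun u => s * q1b u)

def q2C {na ma nb mb : ℕ} (q2a : Fin na → Fin ma → ℝ) (q2b : Fin nb → Fin mb → ℝ) :
    Fin (na + nb) → Fin (ma + mb) → ℝ :=
  Fin.addCases (fun u => Fin.addCases (fun v => q2a u v) (fun _ => 0))
    (fun u => Fin.addCases (fun _ => 0) (fun v => q2b u v))

def WC {ma mb : ℕ} {Z : Type*} (Wa : Fin ma → Z → ℝ) (Wb : Fin mb → Z → ℝ) :
    Fin (ma + mb) → Z → ℝ := Fin.addCases Wa Wb

def iA {na ma nb mb : ℕ} {Z : Type*} (ω : Fin na × Fin ma × Z) :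
    Fin (na + nb) × Fin (ma + mb) × Z := (Fin.castAdd nb ω.1, Fin.castAdd mb ω.2.1, ω.2.2)

def iB {na ma nb mb : ℕ} {Z : Type*} (ω : Fin nb × Fin mb × Z) :
    Fin (na + nb) × Fin (ma + mb) × Z := (Fin.natAdd na ω.1, Fin.natAdd ma ω.2.1, ω.2.2)

variable {Z : Type*} [Fintype Z] [DecidableEq Z] {na ma nb mb : ℕ}
  {q1a : Fin na → ℝ} {q2a : Fin na → Fin ma → ℝ} {Wa : Fin ma → Z → ℝ}
  {q1b : Fin nb → ℝ} {q2b : Fin nb → Fin mb → ℝ} {Wb : Fin mb → Z → ℝ}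
  {t s : ℝ}

lemma muD_mass {n m : ℕ} {q1 : Fin n → ℝ} {q2 : Fin n → Fin m → ℝ} {Wv : Fin m → Z → ℝ}
    (h1 : ∑ u, q1 u = 1) (h2 : ∀ u, ∑ v, q2 u v = 1) (hW : ∀ v, ∑ z, Wv v z = 1) :
    ∑ ω, muD q1 q2 Wv ω = 1 := by
  rw [Fintype.sum_prod_type]
  have h3 : ∀ u : Fin n, ∑ p : Fin m × Z, muD q1 q2 Wv (u, p) = q1 u := by
    intro u
    rw [Fintype.sum_prod_type]
    have h4 : ∀ v, ∑ z, muD q1 q2 Wv (u, v, z) = q1 u * q2 u v := by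
      intro v
      show ∑ z, q1 u * q2 u v * Wv v z = _
      rw [← Finset.mul_sum, hW v, mul_one]
    simp_rw [h4]
    rw [← Finset.mul_sum, h2 u, mul_one]
  simp_rw [h3]
  exact h1

lemma muD_nonneg {n m : ℕ} {q1 : Fin n → ℝ} {q2 : Fin n → Fin m → ℝ} {Wv : Fin m → Z → ℝ}
    (h1 : ∀ u, 0 ≤ q1 u) (h2 : ∀ u v, 0 ≤ q2 u v) (hW : ∀ v z, 0 ≤ Wv v z) :
    ∀ ω, 0 ≤ muD q1 q2 Wv ω :=
  fun ω => mul_nonneg (mul_nonneg (h1 _) (h2 _ _)) (hW _ _)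

lemma muC_diag1 (u : Fin na) (v : Fin ma) (z : Z) :
    muD (q1C q1a q1b t s) (q2C q2a q2b) (WC Wa Wb)
      (Fin.castAdd nb u, Fin.castAdd mb v, z) = t * muD q1a q2a Wa (u, v, z) := by
  unfold muD q1C q2C WC
  simp
  ring

lemma muC_diag2 (u : Fin nb) (v : Fin mb) (z : Z) :
    muD (q1C q1a q1b t s) (q2C q2a q2b) (WC Wa Wb)
      (Fin.natAdd na u, Fin.natAdd ma v, z) = s * muD q1b q2b Wb (u, v, z) := by
  unfold muD q1C q2C WC
  simp
  ring

lemma muC_cross1 (u : Fin na) (v : Fin mb) (z : Z) :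
    muD (q1C q1a q1b t s) (q2C q2a q2b) (WC Wa Wb)
      (Fin.castAdd nb u, Fin.natAdd ma v, z) = 0 := by
  unfold muD q2C
  simp

lemma muC_cross2 (u : Fin nb) (v : Fin ma) (z : Z) :
    muD (q1C q1a q1b t s) (q2C q2a q2b) (WC Wa Wb)
      (Fin.natAdd na u, Fin.castAdd mb v, z) = 0 := by
  unfold muD q2C
  simp

lemma sum_ind_muC (g : Fin (na + nb) × Fin (ma + mb) × Z → Prop) [DecidablePred g] :
    ∑ ω', (if g ω' then muD (q1C q1a q1b t s) (q2C q2a q2b) (WC Wa Wb) ω' else 0)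
      = t * ∑ ω, (if g (iA ω) then muD q1a q2a Wa ω else 0)
      + s * ∑ ω, (if g (iB ω) then muD q1b q2b Wb ω else 0) := by
  have expand : ∀ F : Fin (na + nb) × Fin (ma + mb) × Z → ℝ,
      ∑ ω', F ω' =
        ((∑ u : Fin na, ∑ v : Fin ma, ∑ z, F (Fin.castAdd nb u, Fin.castAdd mb v, z))
        + ∑ u : Fin na, ∑ v : Fin mb, ∑ z, F (Fin.castAdd nb u, Fin.natAdd ma v, z))
        + ((∑ u : Fin nb, ∑ v : Fin ma, ∑ z, F (Fin.natAdd na u, Fin.castAdd mb v, z))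
        + ∑ u : Fin nb, ∑ v : Fin mb, ∑ z, F (Fin.natAdd na u, Fin.natAdd ma v, z)) := by
    intro F
    rw [Fintype.sum_prod_type, Fin.sum_univ_add]
    congr 1
    · rw [← Finset.sum_add_distrib]
      refine Finset.sum_congr rfl fun u _ => ?_
      rw [Fintype.sum_prod_type, Fin.sum_univ_add]
    · rw [← Finset.sum_add_distrib]
      refine Finset.sum_congr rfl fun u _ => ?_
      rw [Fintype.sum_prod_type, Fin.sum_univ_add]
  rw [expand]
  have c1 : ∀ (u : Fin na) (v : Fin mb), ∑ z,
      (if g (Fin.castAdd nb u, Fin.natAdd ma v, z) then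
        muD (q1C q1a q1b t s) (q2C q2a q2b) (WC Wa Wb) (Fin.castAdd nb u, Fin.natAdd ma v, z)
      else 0) = 0 := by
    intro u v
    refine Finset.sum_eq_zero fun z _ => ?_
    rw [muC_cross1]
    simp
  have c2 : ∀ (u : Fin nb) (v : Fin ma), ∑ z,
      (if g (Fin.natAdd na u, Fin.castAdd mb v, z) then
        muD (q1C q1a q1b t s) (q2C q2a q2b) (WC Wa Wb) (Fin.natAdd na u, Fin.castAdd mb v, z)
      else 0) = 0 := by
    intro u v
    refine Finset.sum_eq_zero fun z _ => ?_
    rw [muC_cross2]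
    simp
  simp_rw [c1, c2, Finset.sum_const_zero, add_zero, zero_add]
  have expandA : ∀ F : Fin na × Fin ma × Z → ℝ, ∑ ω, F ω = ∑ u, ∑ v, ∑ z, F (u, v, z) := by
    intro F
    rw [Fintype.sum_prod_type]
    exact Finset.sum_congr rfl fun u _ => Fintype.sum_prod_type _
  have expandB : ∀ F : Fin nb × Fin mb × Z → ℝ, ∑ ω, F ω = ∑ u, ∑ v, ∑ z, F (u, v, z) := by
    intro F
    rw [Fintype.sum_prod_type]
    exact Finset.sum_congr rfl fun u _ => Fintype.sum_prod_type _
  rw [expandA, expandB, Finset.mul_sum, Finset.mul_sum]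
  congr 1
  · refine Finset.sum_congr rfl fun u _ => ?_
    rw [Finset.mul_sum]
    refine Finset.sum_congr rfl fun v _ => ?_
    rw [Finset.mul_sum]
    refine Finset.sum_congr rfl fun z _ => ?_
    simp only [iA, mul_ite, mul_zero]
    by_cases hg : g (Fin.castAdd nb u, Fin.castAdd mb v, z)
    · simp only [hg, ↓reduceIte]
      exact muC_diag1 u v z
    · simp only [hg, ↓reduceIte, mul_zero]
  · refine Finset.sum_congr rfl fun u _ => ?_
    rw [Finset.mul_sum]
    refine Finset.sum_congr rfl fun v _ => ?_
    rw [Finset.mul_sum]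
    refine Finset.sum_congr rfl fun z _ => ?_
    simp only [iB, mul_ite, mul_zero]
    by_cases hg : g (Fin.natAdd na u, Fin.natAdd ma v, z)
    · simp only [hg, ↓reduceIte]
      exact muC_diag2 u v z
    · simp only [hg, ↓reduceIte, mul_zero]

lemma natAdd_inj {n m : ℕ} : Function.Injective (Fin.natAdd n : Fin m → Fin (n + m)) := by
  intro u v h
  simp only [Fin.ext_iff, Fin.coe_natAdd] at h
  exact Fin.ext (by omega)

lemma cast_ne_nat {n m : ℕ} (u : Fin n) (v : Fin m) :
    Fin.castAdd m u ≠ Fin.natAdd n v := by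
  have := u.isLt
  simp only [ne_eq, Fin.ext_iff, Fin.coe_castAdd, Fin.coe_natAdd]
  omega

lemma probC {A : Type*} [DecidableEq A]
    (V : Fin (na + nb) × Fin (ma + mb) × Z → A) (c : A) :
    prob (muD (q1C q1a q1b t s) (q2C q2a q2b) (WC Wa Wb)) V c
      = t * prob (muD q1a q2a Wa) (fun ω => V (iA ω)) c
      + s * prob (muD q1b q2b Wb) (fun ω => V (iB ω)) c := by
  unfold prob
  exact sum_ind_muC (g := fun ω' => V ω' = c)

lemma HentC_split {A Aa Ab : Type*} [Fintype A] [DecidableEq A] [Fintype Aa]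
    [DecidableEq Aa] [Fintype Ab] [DecidableEq Ab]
    {V' : Fin (na + nb) × Fin (ma + mb) × Z → A}
    {Va : Fin na × Fin ma × Z → Aa} {Vb : Fin nb × Fin mb × Z → Ab}
    {ja : Aa → A} {jb : Ab → A}
    (hja : Function.Injective ja) (hjb : Function.Injective jb)
    (hdis : ∀ x y, ja x ≠ jb y)
    (hcov : ∀ c, (∃ x, ja x = c) ∨ (∃ y, jb y = c))
    (hVa : ∀ ω, V' (iA ω) = ja (Va ω)) (hVb : ∀ ω, V' (iB ω) = jb (Vb ω))
    (hma : ∑ ω, muD q1a q2a Wa ω = 1) (hmb : ∑ ω, muD q1b q2b Wb ω = 1) :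
    Hent (muD (q1C q1a q1b t s) (q2C q2a q2b) (WC Wa Wb)) V'
      = negMulLog t + negMulLog s + t * Hent (muD q1a q2a Wa) Va + s * Hent (muD q1b q2b Wb) Vb := by
  refine Hent_split' hja hjb hdis hcov ?_ ?_ hma hmb
  · intro x
    rw [probC, show (fun ω => V' (iA ω)) = fun ω => ja (Va ω) from funext hVa,
      show (fun ω => V' (iB ω)) = fun ω => jb (Vb ω) from funext hVb,
      prob_comp_inj' (muD q1a q2a Wa) Va hja x,
      prob_eq_zero' (muD q1b q2b Wb) (fun ω => jb (Vb ω)) (fun ω h => hdis x (Vb ω) h.symm)]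
    ring
  · intro y
    rw [probC, show (fun ω => V' (iA ω)) = fun ω => ja (Va ω) from funext hVa,
      show (fun ω => V' (iB ω)) = fun ω => jb (Vb ω) from funext hVb,
      prob_comp_inj' (muD q1b q2b Wb) Vb hjb y,
      prob_eq_zero' (muD q1a q2a Wa) (fun ω => ja (Va ω)) (fun ω h => hdis (Va ω) y h)]
    ring

lemma HentC_mix {C : Type*} [Fintype C] [DecidableEq C] (f : Z → C)
    (hA0 : ∀ ω, 0 ≤ muD q1a q2a Wa ω) (hB0 : ∀ ω, 0 ≤ muD q1b q2b Wb ω)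
    (ht : 0 ≤ t) (hs : 0 ≤ s) (hts : t + s = 1) :
    t * Hent (muD q1a q2a Wa) (fun ω => f ω.2.2) + s * Hent (muD q1b q2b Wb) (fun ω => f ω.2.2)
      ≤ Hent (muD (q1C q1a q1b t s) (q2C q2a q2b) (WC Wa Wb)) (fun ω => f ω.2.2) := by
  refine Hent_mix_ge' hA0 hB0 ht hs hts ?_
  intro c
  exact probC (fun ω => f ω.2.2) c

lemma HentC_10
    (hma : ∑ ω, muD q1a q2a Wa ω = 1) (hmb : ∑ ω, muD q1b q2b Wb ω = 1) :
    Hent (muD (q1C q1a q1b t s) (q2C q2a q2b) (WC Wa Wb)) (fun ω => ω.1)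
      = negMulLog t + negMulLog s + t * Hent (muD q1a q2a Wa) (fun ω => ω.1)
        + s * Hent (muD q1b q2b Wb) (fun ω => ω.1) := by
  refine HentC_split (ja := Fin.castAdd nb) (jb := Fin.natAdd na) (Fin.castAdd_injective _ _) natAdd_inj
    cast_ne_nat ?_ (fun ω => rfl) (fun ω => rfl) hma hmb
  intro c
  induction c using Fin.addCases with
  | left u => exact Or.inl ⟨u, rfl⟩
  | right u => exact Or.inr ⟨u, rfl⟩

lemma HentC_1r {C : Type*} [Fintype C] [DecidableEq C] (f : Z → C)
    (hma : ∑ ω, muD q1a q2a Wa ω = 1) (hmb : ∑ ω, muD q1b q2b Wb ω = 1) :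
    Hent (muD (q1C q1a q1b t s) (q2C q2a q2b) (WC Wa Wb)) (fun ω => (ω.1, f ω.2.2))
      = negMulLog t + negMulLog s + t * Hent (muD q1a q2a Wa) (fun ω => (ω.1, f ω.2.2))
        + s * Hent (muD q1b q2b Wb) (fun ω => (ω.1, f ω.2.2)) := by
  refine HentC_split (ja := fun p : Fin na × C => (Fin.castAdd nb p.1, p.2))
      (jb := fun p : Fin nb × C => (Fin.natAdd na p.1, p.2))
      ?_ ?_ ?_ ?_ (fun ω => rfl) (fun ω => rfl) hma hmb
  · rintro ⟨p1, p2⟩ ⟨q1, q2⟩ h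
    simp only [Prod.mk.injEq, Fin.ext_iff, Fin.coe_castAdd, Fin.coe_natAdd] at h ⊢
    obtain ⟨h1, h2⟩ := h
    exact ⟨by omega, h2⟩
  · rintro ⟨p1, p2⟩ ⟨q1, q2⟩ h
    simp only [Prod.mk.injEq, Fin.ext_iff, Fin.coe_castAdd, Fin.coe_natAdd] at h ⊢
    obtain ⟨h1, h2⟩ := h
    exact ⟨by omega, h2⟩
  · rintro ⟨p1, p2⟩ ⟨q1, q2⟩ h
    simp only [Prod.mk.injEq, Fin.ext_iff, Fin.coe_castAdd, Fin.coe_natAdd] at h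
    obtain ⟨h1, -⟩ := h
    have := p1.isLt
    omega
  · rintro ⟨c1, c2⟩
    induction c1 using Fin.addCases with
    | left u => exact Or.inl ⟨(u, c2), rfl⟩
    | right u => exact Or.inr ⟨(u, c2), rfl⟩

lemma HentC_1l {C : Type*} [Fintype C] [DecidableEq C] (f : Z → C)
    (hma : ∑ ω, muD q1a q2a Wa ω = 1) (hmb : ∑ ω, muD q1b q2b Wb ω = 1) :
    Hent (muD (q1C q1a q1b t s) (q2C q2a q2b) (WC Wa Wb)) (fun ω => (f ω.2.2, ω.1))
      = negMulLog t + negMulLog s + t * Hent (muD q1a q2a Wa) (fun ω => (f ω.2.2, ω.1))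
        + s * Hent (muD q1b q2b Wb) (fun ω => (f ω.2.2, ω.1)) := by
  refine HentC_split (ja := fun p : C × Fin na => (p.1, Fin.castAdd nb p.2))
      (jb := fun p : C × Fin nb => (p.1, Fin.natAdd na p.2))
      ?_ ?_ ?_ ?_ (fun ω => rfl) (fun ω => rfl) hma hmb
  · rintro ⟨p1, p2⟩ ⟨q1, q2⟩ h
    simp only [Prod.mk.injEq, Fin.ext_iff, Fin.coe_castAdd, Fin.coe_natAdd] at h ⊢
    obtain ⟨h1, h2⟩ := h
    exact ⟨h1, by omega⟩
  · rintro ⟨p1, p2⟩ ⟨q1, q2⟩ h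
    simp only [Prod.mk.injEq, Fin.ext_iff, Fin.coe_castAdd, Fin.coe_natAdd] at h ⊢
    obtain ⟨h1, h2⟩ := h
    exact ⟨h1, by omega⟩
  · rintro ⟨p1, p2⟩ ⟨q1, q2⟩ h
    simp only [Prod.mk.injEq, Fin.ext_iff, Fin.coe_castAdd, Fin.coe_natAdd] at h
    obtain ⟨-, h2⟩ := h
    have := p2.isLt
    omega
  · rintro ⟨c1, c2⟩
    induction c2 using Fin.addCases with
    | left u => exact Or.inl ⟨(c1, u), rfl⟩
    | right u => exact Or.inr ⟨(c1, u), rfl⟩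

lemma HentC_1l2 {C D : Type*} [Fintype C] [DecidableEq C] [Fintype D] [DecidableEq D]
    (f : Z → C) (g : Z → D)
    (hma : ∑ ω, muD q1a q2a Wa ω = 1) (hmb : ∑ ω, muD q1b q2b Wb ω = 1) :
    Hent (muD (q1C q1a q1b t s) (q2C q2a q2b) (WC Wa Wb)) (fun ω => (f ω.2.2, g ω.2.2, ω.1))
      = negMulLog t + negMulLog s + t * Hent (muD q1a q2a Wa) (fun ω => (f ω.2.2, g ω.2.2, ω.1))
        + s * Hent (muD q1b q2b Wb) (fun ω => (f ω.2.2, g ω.2.2, ω.1)) := by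
  refine HentC_split (ja := fun p : C × D × Fin na => (p.1, p.2.1, Fin.castAdd nb p.2.2))
      (jb := fun p : C × D × Fin nb => (p.1, p.2.1, Fin.natAdd na p.2.2))
      ?_ ?_ ?_ ?_ (fun ω => rfl) (fun ω => rfl) hma hmb
  · rintro ⟨p1, p2, p3⟩ ⟨q1, q2, q3⟩ h
    simp only [Prod.mk.injEq, Fin.ext_iff, Fin.coe_castAdd, Fin.coe_natAdd] at h ⊢
    obtain ⟨h1, h2, h3⟩ := h
    exact ⟨h1, h2, by omega⟩
  · rintro ⟨p1, p2, p3⟩ ⟨q1, q2, q3⟩ h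
    simp only [Prod.mk.injEq, Fin.ext_iff, Fin.coe_castAdd, Fin.coe_natAdd] at h ⊢
    obtain ⟨h1, h2, h3⟩ := h
    exact ⟨h1, h2, by omega⟩
  · rintro ⟨p1, p2, p3⟩ ⟨q1, q2, q3⟩ h
    simp only [Prod.mk.injEq, Fin.ext_iff, Fin.coe_castAdd, Fin.coe_natAdd] at h
    obtain ⟨-, -, h3⟩ := h
    have := p3.isLt
    omega
  · rintro ⟨c1, c2, c3⟩
    induction c3 using Fin.addCases with
    | left u => exact Or.inl ⟨(c1, c2, u), rfl⟩
    | right u => exact Or.inr ⟨(c1, c2, u), rfl⟩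

lemma HentC_20
    (hma : ∑ ω, muD q1a q2a Wa ω = 1) (hmb : ∑ ω, muD q1b q2b Wb ω = 1) :
    Hent (muD (q1C q1a q1b t s) (q2C q2a q2b) (WC Wa Wb)) (fun ω => ω.2.1)
      = negMulLog t + negMulLog s + t * Hent (muD q1a q2a Wa) (fun ω => ω.2.1)
        + s * Hent (muD q1b q2b Wb) (fun ω => ω.2.1) := by
  refine HentC_split (ja := Fin.castAdd mb) (jb := Fin.natAdd ma) (Fin.castAdd_injective _ _) natAdd_inj
    cast_ne_nat ?_ (fun ω => rfl) (fun ω => rfl) hma hmb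
  intro c
  induction c using Fin.addCases with
  | left u => exact Or.inl ⟨u, rfl⟩
  | right u => exact Or.inr ⟨u, rfl⟩

lemma HentC_2r {C : Type*} [Fintype C] [DecidableEq C] (f : Z → C)
    (hma : ∑ ω, muD q1a q2a Wa ω = 1) (hmb : ∑ ω, muD q1b q2b Wb ω = 1) :
    Hent (muD (q1C q1a q1b t s) (q2C q2a q2b) (WC Wa Wb)) (fun ω => (ω.2.1, f ω.2.2))
      = negMulLog t + negMulLog s + t * Hent (muD q1a q2a Wa) (fun ω => (ω.2.1, f ω.2.2))
        + s * Hent (muD q1b q2b Wb) (fun ω => (ω.2.1, f ω.2.2)) := by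
  refine HentC_split (ja := fun p : Fin ma × C => (Fin.castAdd mb p.1, p.2))
      (jb := fun p : Fin mb × C => (Fin.natAdd ma p.1, p.2))
      ?_ ?_ ?_ ?_ (fun ω => rfl) (fun ω => rfl) hma hmb
  · rintro ⟨p1, p2⟩ ⟨q1, q2⟩ h
    simp only [Prod.mk.injEq, Fin.ext_iff, Fin.coe_castAdd, Fin.coe_natAdd] at h ⊢
    obtain ⟨h1, h2⟩ := h
    exact ⟨by omega, h2⟩
  · rintro ⟨p1, p2⟩ ⟨q1, q2⟩ h
    simp only [Prod.mk.injEq, Fin.ext_iff, Fin.coe_castAdd, Fin.coe_natAdd] at h ⊢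
    obtain ⟨h1, h2⟩ := h
    exact ⟨by omega, h2⟩
  · rintro ⟨p1, p2⟩ ⟨q1, q2⟩ h
    simp only [Prod.mk.injEq, Fin.ext_iff, Fin.coe_castAdd, Fin.coe_natAdd] at h
    obtain ⟨h1, -⟩ := h
    have := p1.isLt
    omega
  · rintro ⟨c1, c2⟩
    induction c1 using Fin.addCases with
    | left u => exact Or.inl ⟨(u, c2), rfl⟩
    | right u => exact Or.inr ⟨(u, c2), rfl⟩

lemma HentC_2l {C : Type*} [Fintype C] [DecidableEq C] (f : Z → C)
    (hma : ∑ ω, muD q1a q2a Wa ω = 1) (hmb : ∑ ω, muD q1b q2b Wb ω = 1) :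
    Hent (muD (q1C q1a q1b t s) (q2C q2a q2b) (WC Wa Wb)) (fun ω => (f ω.2.2, ω.2.1))
      = negMulLog t + negMulLog s + t * Hent (muD q1a q2a Wa) (fun ω => (f ω.2.2, ω.2.1))
        + s * Hent (muD q1b q2b Wb) (fun ω => (f ω.2.2, ω.2.1)) := by
  refine HentC_split (ja := fun p : C × Fin ma => (p.1, Fin.castAdd mb p.2))
      (jb := fun p : C × Fin mb => (p.1, Fin.natAdd ma p.2))
      ?_ ?_ ?_ ?_ (fun ω => rfl) (fun ω => rfl) hma hmb
  · rintro ⟨p1, p2⟩ ⟨q1, q2⟩ h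
    simp only [Prod.mk.injEq, Fin.ext_iff, Fin.coe_castAdd, Fin.coe_natAdd] at h ⊢
    obtain ⟨h1, h2⟩ := h
    exact ⟨h1, by omega⟩
  · rintro ⟨p1, p2⟩ ⟨q1, q2⟩ h
    simp only [Prod.mk.injEq, Fin.ext_iff, Fin.coe_castAdd, Fin.coe_natAdd] at h ⊢
    obtain ⟨h1, h2⟩ := h
    exact ⟨h1, by omega⟩
  · rintro ⟨p1, p2⟩ ⟨q1, q2⟩ h
    simp only [Prod.mk.injEq, Fin.ext_iff, Fin.coe_castAdd, Fin.coe_natAdd] at h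
    obtain ⟨-, h2⟩ := h
    have := p2.isLt
    omega
  · rintro ⟨c1, c2⟩
    induction c2 using Fin.addCases with
    | left u => exact Or.inl ⟨(c1, u), rfl⟩
    | right u => exact Or.inr ⟨(c1, u), rfl⟩

lemma HentC_2l2 {C D : Type*} [Fintype C] [DecidableEq C] [Fintype D] [DecidableEq D]
    (f : Z → C) (g : Z → D)
    (hma : ∑ ω, muD q1a q2a Wa ω = 1) (hmb : ∑ ω, muD q1b q2b Wb ω = 1) :
    Hent (muD (q1C q1a q1b t s) (q2C q2a q2b) (WC Wa Wb)) (fun ω => (f ω.2.2, g ω.2.2, ω.2.1))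
      = negMulLog t + negMulLog s + t * Hent (muD q1a q2a Wa) (fun ω => (f ω.2.2, g ω.2.2, ω.2.1))
        + s * Hent (muD q1b q2b Wb) (fun ω => (f ω.2.2, g ω.2.2, ω.2.1)) := by
  refine HentC_split (ja := fun p : C × D × Fin ma => (p.1, p.2.1, Fin.castAdd mb p.2.2))
      (jb := fun p : C × D × Fin mb => (p.1, p.2.1, Fin.natAdd ma p.2.2))
      ?_ ?_ ?_ ?_ (fun ω => rfl) (fun ω => rfl) hma hmb
  · rintro ⟨p1, p2, p3⟩ ⟨q1, q2, q3⟩ h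
    simp only [Prod.mk.injEq, Fin.ext_iff, Fin.coe_castAdd, Fin.coe_natAdd] at h ⊢
    obtain ⟨h1, h2, h3⟩ := h
    exact ⟨h1, h2, by omega⟩
  · rintro ⟨p1, p2, p3⟩ ⟨q1, q2, q3⟩ h
    simp only [Prod.mk.injEq, Fin.ext_iff, Fin.coe_castAdd, Fin.coe_natAdd] at h ⊢
    obtain ⟨h1, h2, h3⟩ := h
    exact ⟨h1, h2, by omega⟩
  · rintro ⟨p1, p2, p3⟩ ⟨q1, q2, q3⟩ h
    simp only [Prod.mk.injEq, Fin.ext_iff, Fin.coe_castAdd, Fin.coe_natAdd] at h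
    obtain ⟨-, -, h3⟩ := h
    have := p3.isLt
    omega
  · rintro ⟨c1, c2, c3⟩
    induction c3 using Fin.addCases with
    | left u => exact Or.inl ⟨(c1, c2, u), rfl⟩
    | right u => exact Or.inr ⟨(c1, c2, u), rfl⟩

lemma MI_1_ge {C : Type*} [Fintype C] [DecidableEq C] (f : Z → C)
    (hma : ∑ ω, muD q1a q2a Wa ω = 1) (hmb : ∑ ω, muD q1b q2b Wb ω = 1)
    (hA0 : ∀ ω, 0 ≤ muD q1a q2a Wa ω) (hB0 : ∀ ω, 0 ≤ muD q1b q2b Wb ω)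
    (ht : 0 ≤ t) (hs : 0 ≤ s) (hts : t + s = 1) :
    t * MI (muD q1a q2a Wa) (fun ω => ω.1) (fun ω => f ω.2.2)
      + s * MI (muD q1b q2b Wb) (fun ω => ω.1) (fun ω => f ω.2.2)
      ≤ MI (muD (q1C q1a q1b t s) (q2C q2a q2b) (WC Wa Wb)) (fun ω => ω.1) (fun ω => f ω.2.2) := by
  simp only [MI]
  have h1 := HentC_10 (q1a := q1a) (q2a := q2a) (Wa := Wa) (q1b := q1b) (q2b := q2b)
    (Wb := Wb) (t := t) (s := s) hma hmb
  have h2 := HentC_1r (t := t) (s := s) f hma hmb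
  have h3 := HentC_mix f hA0 hB0 ht hs hts
  rw [h1, h2]
  nlinarith [h3]

lemma CMI_1_eq {C D : Type*} [Fintype C] [DecidableEq C] [Fintype D] [DecidableEq D]
    (f : Z → C) (g : Z → D)
    (hma : ∑ ω, muD q1a q2a Wa ω = 1) (hmb : ∑ ω, muD q1b q2b Wb ω = 1) :
    CMI (muD (q1C q1a q1b t s) (q2C q2a q2b) (WC Wa Wb)) (fun ω => f ω.2.2) (fun ω => g ω.2.2) (fun ω => ω.1)
      = t * CMI (muD q1a q2a Wa) (fun ω => f ω.2.2) (fun ω => g ω.2.2) (fun ω => ω.1)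
        + s * CMI (muD q1b q2b Wb) (fun ω => f ω.2.2) (fun ω => g ω.2.2) (fun ω => ω.1) := by
  simp only [CMI]
  rw [HentC_1l (t := t) (s := s) f hma hmb, HentC_1l (t := t) (s := s) g hma hmb, HentC_1l2 (t := t) (s := s) f g hma hmb,
    HentC_10 (q1a := q1a) (q2a := q2a) (Wa := Wa) (q1b := q1b) (q2b := q2b)
      (t := t) (s := s) hma hmb]
  ring

lemma MI_2_ge {C : Type*} [Fintype C] [DecidableEq C] (f : Z → C)
    (hma : ∑ ω, muD q1a q2a Wa ω = 1) (hmb : ∑ ω, muD q1b q2b Wb ω = 1)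
    (hA0 : ∀ ω, 0 ≤ muD q1a q2a Wa ω) (hB0 : ∀ ω, 0 ≤ muD q1b q2b Wb ω)
    (ht : 0 ≤ t) (hs : 0 ≤ s) (hts : t + s = 1) :
    t * MI (muD q1a q2a Wa) (fun ω => ω.2.1) (fun ω => f ω.2.2)
      + s * MI (muD q1b q2b Wb) (fun ω => ω.2.1) (fun ω => f ω.2.2)
      ≤ MI (muD (q1C q1a q1b t s) (q2C q2a q2b) (WC Wa Wb)) (fun ω => ω.2.1) (fun ω => f ω.2.2) := by
  simp only [MI]
  have h1 := HentC_20 (q1a := q1a) (q2a := q2a) (Wa := Wa) (q1b := q1b) (q2b := q2b)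
    (Wb := Wb) (t := t) (s := s) hma hmb
  have h2 := HentC_2r (t := t) (s := s) f hma hmb
  have h3 := HentC_mix f hA0 hB0 ht hs hts
  rw [h1, h2]
  nlinarith [h3]

lemma CMI_2_eq {C D : Type*} [Fintype C] [DecidableEq C] [Fintype D] [DecidableEq D]
    (f : Z → C) (g : Z → D)
    (hma : ∑ ω, muD q1a q2a Wa ω = 1) (hmb : ∑ ω, muD q1b q2b Wb ω = 1) :
    CMI (muD (q1C q1a q1b t s) (q2C q2a q2b) (WC Wa Wb)) (fun ω => f ω.2.2) (fun ω => g ω.2.2) (fun ω => ω.2.1)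
      = t * CMI (muD q1a q2a Wa) (fun ω => f ω.2.2) (fun ω => g ω.2.2) (fun ω => ω.2.1)
        + s * CMI (muD q1b q2b Wb) (fun ω => f ω.2.2) (fun ω => g ω.2.2) (fun ω => ω.2.1) := by
  simp only [CMI]
  rw [HentC_2l (t := t) (s := s) f hma hmb, HentC_2l (t := t) (s := s) g hma hmb, HentC_2l2 (t := t) (s := s) f g hma hmb,
    HentC_20 (q1a := q1a) (q2a := q2a) (Wa := Wa) (q1b := q1b) (q2b := q2b)
      (t := t) (s := s) hma hmb]
  ring

end Construction

set_option maxHeartbeats 2000000 in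
lemma combine_mem {𝒳 𝒴₁ 𝒴₂ 𝒴₃ : Type*} [Fintype 𝒳] [DecidableEq 𝒳]
    [Fintype 𝒴₁] [DecidableEq 𝒴₁] [Fintype 𝒴₂] [DecidableEq 𝒴₂]
    [Fintype 𝒴₃] [DecidableEq 𝒴₃]
    (W : 𝒳 → 𝒴₁ × 𝒴₂ × 𝒴₃ → ℝ)
    (hW0 : ∀ x y, 0 ≤ W x y) (hW1 : ∀ x, (∑ y, W x y) = 1)
    {t s : ℝ} (ht : 0 ≤ t) (hs : 0 ≤ s) (hts : t + s = 1)
    {Ra Rb : ℝ × ℝ} (hRa : Ra ∈ capRegionThm1 W) (hRb : Rb ∈ capRegionThm1 W) :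
    t • Ra + s • Rb ∈ capRegionThm1 W := by
  simp only [capRegionThm1, Set.mem_setOf_eq] at hRa hRb
  obtain ⟨ha0, ha1, na, ma, q1a, q2a, qxa, hq1a0, hq1a1, hq2a0, hq2a1, hqxa0, hqxa1,
    hmia, hsa⟩ := hRa
  obtain ⟨hb0, hb1, nb, mb, q1b, q2b, qxb, hq1b0, hq1b1, hq2b0, hq2b1, hqxb0, hqxb1,
    hmib, hsb⟩ := hRb
  have hWa1 : ∀ v, ∑ z : 𝒳 × (𝒴₁ × 𝒴₂ × 𝒴₃), qxa v z.1 * W z.1 z.2 = 1 := by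
    intro v
    calc ∑ z : 𝒳 × (𝒴₁ × 𝒴₂ × 𝒴₃), qxa v z.1 * W z.1 z.2
        = ∑ x, ∑ y, qxa v x * W x y := Fintype.sum_prod_type _
      _ = ∑ x, qxa v x := by
          refine Finset.sum_congr rfl fun x _ => ?_
          rw [← Finset.mul_sum, hW1, mul_one]
      _ = 1 := hqxa1 v
  have hWb1 : ∀ v, ∑ z : 𝒳 × (𝒴₁ × 𝒴₂ × 𝒴₃), qxb v z.1 * W z.1 z.2 = 1 := by
    intro v
    calc ∑ z : 𝒳 × (𝒴₁ × 𝒴₂ × 𝒴₃), qxb v z.1 * W z.1 z.2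
        = ∑ x, ∑ y, qxb v x * W x y := Fintype.sum_prod_type _
      _ = ∑ x, qxb v x := by
          refine Finset.sum_congr rfl fun x _ => ?_
          rw [← Finset.mul_sum, hW1, mul_one]
      _ = 1 := hqxb1 v
  have hma : ∑ ω, muD q1a q2a (fun v (z : 𝒳 × (𝒴₁ × 𝒴₂ × 𝒴₃)) => qxa v z.1 * W z.1 z.2) ω = 1 := muD_mass hq1a1 hq2a1 hWa1
  have hmb : ∑ ω, muD q1b q2b (fun v (z : 𝒳 × (𝒴₁ × 𝒴₂ × 𝒴₃)) => qxb v z.1 * W z.1 z.2) ω = 1 := muD_mass hq1b1 hq2b1 hWb1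
  have hA0 : ∀ ω, 0 ≤ muD q1a q2a (fun v (z : 𝒳 × (𝒴₁ × 𝒴₂ × 𝒴₃)) => qxa v z.1 * W z.1 z.2) ω :=
    muD_nonneg hq1a0 hq2a0 (fun v z => mul_nonneg (hqxa0 _ _) (hW0 _ _))
  have hB0 : ∀ ω, 0 ≤ muD q1b q2b (fun v (z : 𝒳 × (𝒴₁ × 𝒴₂ × 𝒴₃)) => qxb v z.1 * W z.1 z.2) ω :=
    muD_nonneg hq1b0 hq2b0 (fun v z => mul_nonneg (hqxb0 _ _) (hW0 _ _))
  have hμa : (fun ω : Fin na × Fin ma × 𝒳 × (𝒴₁ × 𝒴₂ × 𝒴₃) =>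
      q1a ω.1 * q2a ω.1 ω.2.1 * qxa ω.2.1 ω.2.2.1 * W ω.2.2.1 ω.2.2.2) = muD q1a q2a (fun v (z : 𝒳 × (𝒴₁ × 𝒴₂ × 𝒴₃)) => qxa v z.1 * W z.1 z.2) := by
    funext ω
    unfold muD
    ring
  have hμb : (fun ω : Fin nb × Fin mb × 𝒳 × (𝒴₁ × 𝒴₂ × 𝒴₃) =>
      q1b ω.1 * q2b ω.1 ω.2.1 * qxb ω.2.1 ω.2.2.1 * W ω.2.2.1 ω.2.2.2) = muD q1b q2b (fun v (z : 𝒳 × (𝒴₁ × 𝒴₂ × 𝒴₃)) => qxb v z.1 * W z.1 z.2) := by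
    funext ω
    unfold muD
    ring
  have hμc : (fun ω : Fin (na + nb) × Fin (ma + mb) × 𝒳 × (𝒴₁ × 𝒴₂ × 𝒴₃) =>
      q1C q1a q1b t s ω.1 * q2C q2a q2b ω.1 ω.2.1
        * Fin.addCases qxa qxb ω.2.1 ω.2.2.1 * W ω.2.2.1 ω.2.2.2) = muD (q1C q1a q1b t s) (q2C q2a q2b) (WC (fun v (z : 𝒳 × (𝒴₁ × 𝒴₂ × 𝒴₃)) => qxa v z.1 * W z.1 z.2) (fun v (z : 𝒳 × (𝒴₁ × 𝒴₂ × 𝒴₃)) => qxb v z.1 * W z.1 z.2)) := by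
    funext ω
    obtain ⟨u, v, z⟩ := ω
    unfold muD WC
    induction v using Fin.addCases with
    | left v => simp only [Fin.addCases_left]; ring
    | right v => simp only [Fin.addCases_right]; ring
  rw [hμa] at hmia hsa
  rw [hμb] at hmib hsb
  have key1 : t * MI (muD q1a q2a (fun v (z : 𝒳 × (𝒴₁ × 𝒴₂ × 𝒴₃)) => qxa v z.1 * W z.1 z.2)) (fun ω => ω.1) (fun ω => ω.2.2.2.2.2)
      + s * MI (muD q1b q2b (fun v (z : 𝒳 × (𝒴₁ × 𝒴₂ × 𝒴₃)) => qxb v z.1 * W z.1 z.2)) (fun ω => ω.1) (fun ω => ω.2.2.2.2.2)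
      ≤ MI (muD (q1C q1a q1b t s) (q2C q2a q2b) (WC (fun v (z : 𝒳 × (𝒴₁ × 𝒴₂ × 𝒴₃)) => qxa v z.1 * W z.1 z.2) (fun v (z : 𝒳 × (𝒴₁ × 𝒴₂ × 𝒴₃)) => qxb v z.1 * W z.1 z.2))) (fun ω => ω.1) (fun ω => ω.2.2.2.2.2) := by
    have h := MI_1_ge (q1a := q1a) (q2a := q2a) (q1b := q1b) (q2b := q2b)
      (fun z : 𝒳 × (𝒴₁ × 𝒴₂ × 𝒴₃) => z.2.2.2) hma hmb hA0 hB0 ht hs hts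
    exact h
  have key2 : t * MI (muD q1a q2a (fun v (z : 𝒳 × (𝒴₁ × 𝒴₂ × 𝒴₃)) => qxa v z.1 * W z.1 z.2)) (fun ω => ω.2.1) (fun ω => ω.2.2.2.2.1)
      + s * MI (muD q1b q2b (fun v (z : 𝒳 × (𝒴₁ × 𝒴₂ × 𝒴₃)) => qxb v z.1 * W z.1 z.2)) (fun ω => ω.2.1) (fun ω => ω.2.2.2.2.1)
      ≤ MI (muD (q1C q1a q1b t s) (q2C q2a q2b) (WC (fun v (z : 𝒳 × (𝒴₁ × 𝒴₂ × 𝒴₃)) => qxa v z.1 * W z.1 z.2) (fun v (z : 𝒳 × (𝒴₁ × 𝒴₂ × 𝒴₃)) => qxb v z.1 * W z.1 z.2))) (fun ω => ω.2.1) (fun ω => ω.2.2.2.2.1) := by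
    have h := MI_2_ge (q1a := q1a) (q2a := q2a) (q1b := q1b) (q2b := q2b)
      (fun z : 𝒳 × (𝒴₁ × 𝒴₂ × 𝒴₃) => z.2.2.1) hma hmb hA0 hB0 ht hs hts
    exact h
  have key3 : CMI (muD (q1C q1a q1b t s) (q2C q2a q2b) (WC (fun v (z : 𝒳 × (𝒴₁ × 𝒴₂ × 𝒴₃)) => qxa v z.1 * W z.1 z.2) (fun v (z : 𝒳 × (𝒴₁ × 𝒴₂ × 𝒴₃)) => qxb v z.1 * W z.1 z.2))) (fun ω => ω.2.2.1) (fun ω => ω.2.2.2.1) (fun ω => ω.1)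
      = t * CMI (muD q1a q2a (fun v (z : 𝒳 × (𝒴₁ × 𝒴₂ × 𝒴₃)) => qxa v z.1 * W z.1 z.2)) (fun ω => ω.2.2.1) (fun ω => ω.2.2.2.1) (fun ω => ω.1)
        + s * CMI (muD q1b q2b (fun v (z : 𝒳 × (𝒴₁ × 𝒴₂ × 𝒴₃)) => qxb v z.1 * W z.1 z.2)) (fun ω => ω.2.2.1) (fun ω => ω.2.2.2.1) (fun ω => ω.1) := by
    have h := CMI_1_eq (q1a := q1a) (q2a := q2a) (q1b := q1b) (q2b := q2b) (t := t) (s := s)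
      (fun z : 𝒳 × (𝒴₁ × 𝒴₂ × 𝒴₃) => z.1) (fun z : 𝒳 × (𝒴₁ × 𝒴₂ × 𝒴₃) => z.2.1) hma hmb
    exact h
  have key4 : CMI (muD (q1C q1a q1b t s) (q2C q2a q2b) (WC (fun v (z : 𝒳 × (𝒴₁ × 𝒴₂ × 𝒴₃)) => qxa v z.1 * W z.1 z.2) (fun v (z : 𝒳 × (𝒴₁ × 𝒴₂ × 𝒴₃)) => qxb v z.1 * W z.1 z.2))) (fun ω => ω.2.2.1) (fun ω => ω.2.2.2.1) (fun ω => ω.2.1)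
      = t * CMI (muD q1a q2a (fun v (z : 𝒳 × (𝒴₁ × 𝒴₂ × 𝒴₃)) => qxa v z.1 * W z.1 z.2)) (fun ω => ω.2.2.1) (fun ω => ω.2.2.2.1) (fun ω => ω.2.1)
        + s * CMI (muD q1b q2b (fun v (z : 𝒳 × (𝒴₁ × 𝒴₂ × 𝒴₃)) => qxb v z.1 * W z.1 z.2)) (fun ω => ω.2.2.1) (fun ω => ω.2.2.2.1) (fun ω => ω.2.1) := by
    have h := CMI_2_eq (q1a := q1a) (q2a := q2a) (q1b := q1b) (q2b := q2b) (t := t) (s := s)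
      (fun z : 𝒳 × (𝒴₁ × 𝒴₂ × 𝒴₃) => z.1) (fun z : 𝒳 × (𝒴₁ × 𝒴₂ × 𝒴₃) => z.2.1) hma hmb
    exact h
  have hfst : (t • Ra + s • Rb).1 = t * Ra.1 + s * Rb.1 := rfl
  have hsnd : (t • Ra + s • Rb).2 = t * Ra.2 + s * Rb.2 := rfl
  refine ⟨?_, ?_, na + nb, ma + mb, q1C q1a q1b t s, q2C q2a q2b, Fin.addCases qxa qxb,
    ?_, ?_, ?_, ?_, ?_, ?_, ?_⟩
  · rw [hfst]
    exact add_nonneg (mul_nonneg ht ha0) (mul_nonneg hs hb0)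
  · rw [hsnd]
    exact add_nonneg (mul_nonneg ht ha1) (mul_nonneg hs hb1)
  · intro u
    unfold q1C
    induction u using Fin.addCases with
    | left u => simpa using mul_nonneg ht (hq1a0 u)
    | right u => simpa using mul_nonneg hs (hq1b0 u)
  · unfold q1C
    rw [Fin.sum_univ_add]
    simp only [Fin.addCases_left, Fin.addCases_right]
    rw [← Finset.mul_sum, ← Finset.mul_sum, hq1a1, hq1b1]
    simpa using hts
  · intro u v
    unfold q2C
    induction u using Fin.addCases with
    | left u =>
      induction v using Fin.addCases with
      | left v => simpa using hq2a0 u v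
      | right v => simp
    | right u =>
      induction v using Fin.addCases with
      | left v => simp
      | right v => simpa using hq2b0 u v
  · intro u
    unfold q2C
    induction u using Fin.addCases with
    | left u =>
      simp only [Fin.addCases_left]
      rw [Fin.sum_univ_add]
      simp only [Fin.addCases_left, Fin.addCases_right]
      simpa using hq2a1 u
    | right u =>
      simp only [Fin.addCases_right]
      rw [Fin.sum_univ_add]
      simp only [Fin.addCases_left, Fin.addCases_right]
      simpa using hq2b1 u
  · intro v x
    induction v using Fin.addCases with
    | left v => simpa using hqxa0 v x
    | right v => simpa using hqxb0 v x
  · intro v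
    induction v using Fin.addCases with
    | left v => simpa using hqxa1 v
    | right v => simpa using hqxb1 v
  · refine ⟨?_, ?_⟩
    · rw [hfst]
      rw [show (fun ω : Fin (na + nb) × Fin (ma + mb) × 𝒳 × (𝒴₁ × 𝒴₂ × 𝒴₃) =>
        q1C q1a q1b t s ω.1 * q2C q2a q2b ω.1 ω.2.1
          * Fin.addCases qxa qxb ω.2.1 ω.2.2.1 * W ω.2.2.1 ω.2.2.2) = muD (q1C q1a q1b t s) (q2C q2a q2b) (WC (fun v (z : 𝒳 × (𝒴₁ × 𝒴₂ × 𝒴₃)) => qxa v z.1 * W z.1 z.2) (fun v (z : 𝒳 × (𝒴₁ × 𝒴₂ × 𝒴₃)) => qxb v z.1 * W z.1 z.2)) from hμc]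
      refine le_min ?_ ?_
      · refine le_trans (add_le_add
          (mul_le_mul_of_nonneg_left (le_trans hmia (min_le_left _ _)) ht)
          (mul_le_mul_of_nonneg_left (le_trans hmib (min_le_left _ _)) hs)) key1
      · refine le_trans (add_le_add
          (mul_le_mul_of_nonneg_left (le_trans hmia (min_le_right _ _)) ht)
          (mul_le_mul_of_nonneg_left (le_trans hmib (min_le_right _ _)) hs)) key2
    · rw [hfst, hsnd]
      rw [show (fun ω : Fin (na + nb) × Fin (ma + mb) × 𝒳 × (𝒴₁ × 𝒴₂ × 𝒴₃) =>
        q1C q1a q1b t s ω.1 * q2C q2a q2b ω.1 ω.2.1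
          * Fin.addCases qxa qxb ω.2.1 ω.2.2.1 * W ω.2.2.1 ω.2.2.2) = muD (q1C q1a q1b t s) (q2C q2a q2b) (WC (fun v (z : 𝒳 × (𝒴₁ × 𝒴₂ × 𝒴₃)) => qxa v z.1 * W z.1 z.2) (fun v (z : 𝒳 × (𝒴₁ × 𝒴₂ × 𝒴₃)) => qxb v z.1 * W z.1 z.2)) from hμc]
      have p1 := mul_le_mul_of_nonneg_left (le_trans hsa (min_le_left _ _)) ht
      have p2 := mul_le_mul_of_nonneg_left (le_trans hsb (min_le_left _ _)) hs
      have p3 := mul_le_mul_of_nonneg_left (le_trans hsa (min_le_right _ _)) ht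
      have p4 := mul_le_mul_of_nonneg_left (le_trans hsb (min_le_right _ _)) hs
      refine le_min ?_ ?_
      · nlinarith [p1, p2, key1, key3]
      · nlinarith [p3, p4, key2, key4]

end CRAux

/-- For any fixed channel, the region of Theorem 1 is a convex subset of `ℝ²`. -/
theorem capRegionThm1_convex {𝒳 𝒴₁ 𝒴₂ 𝒴₃ : Type*} [Fintype 𝒳] [DecidableEq 𝒳]
    [Fintype 𝒴₁] [DecidableEq 𝒴₁] [Fintype 𝒴₂] [DecidableEq 𝒴₂]
    [Fintype 𝒴₃] [DecidableEq 𝒴₃]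
    (W : 𝒳 → 𝒴₁ × 𝒴₂ × 𝒴₃ → ℝ)
    (hW0 : ∀ x y, 0 ≤ W x y) (hW1 : ∀ x, (∑ y, W x y) = 1) :
    Convex ℝ (capRegionThm1 W) := by
  intro Ra hRa Rb hRb t s ht hs hts
  exact combine_mem W hW0 hW1 ht hs hts hRa hRb
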